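/- Let A satisfy the K-condition with C = A⁻¹ and define V_k(z) = (Σ_λ C_{kλ} e^{z_λ}) / (Σ_μ p_μ e^{z_μ}) with z_0 = 0. Then for 1 ≤ i, j ≤ d, the partial derivatives satisfy the Riccati equations ∂V_i/∂z_j = (C_{ij} − p_j V_i) · (Σ_μ A_{jμ} V_μ). -/

import Mathlib

open Finset Matrix Real

/-- Riccati partial differential equations for the canonical velocity functions
of the Krawtchouk Bernoulli system:
`∂V_i/∂z_j = (C_{ij} − p_j V_i) ∑_μ A_{jμ} V_μ` for `1 ≤ i, j ≤ d`. -/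
theorem velocity_riccati
    (d : ℕ) (A C : Matrix (Fin (d + 1)) (Fin (d + 1)) ℝ)
    (p Dd : Fin (d + 1) → ℝ)
    (hp : ∀ ℓ, 0 < p ℓ) (hpsum : ∑ ℓ, p ℓ = 1)
    (hD : ∀ ℓ, 0 < Dd ℓ) (hD0 : Dd 0 = 1)
    (hcol : ∀ ℓ, A ℓ 0 = 1)
    (hK : Aᵀ * Matrix.diagonal p * A = Matrix.diagonal Dd)
    (hC₁ : C * A = 1) (hC₂ : A * C = 1)
    (V : (Fin (d + 1) → ℝ) → Fin (d + 1) → ℝ)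
    (hV : ∀ z k, V z k =
      (∑ l, C k l * Real.exp (z l)) / (∑ μ, p μ * Real.exp (z μ))) :
    ∀ z : Fin (d + 1) → ℝ, z 0 = 0 →
      ∀ i j : Fin (d + 1), i ≠ 0 → j ≠ 0 →
        HasDerivAt (fun t => V (Function.update z j t) i)
          ((C i j - p j * V z i) * ∑ μ, A j μ * V z μ) (z j) := by
  intro z hz0 i j hi hj
  have hSpos : ∀ w : Fin (d+1) → ℝ, 0 < ∑ μ, p μ * Real.exp (w μ) := fun w =>
    Finset.sum_pos (fun μ _ => mul_pos (hp μ) (Real.exp_pos _)) ⟨0, Finset.mem_univ 0⟩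
  -- derivative of numerator
  have hN : HasDerivAt (fun t => ∑ l, C i l * Real.exp (Function.update z j t l))
      (C i j * Real.exp (z j)) (z j) := by
    have h : HasDerivAt (fun t => ∑ l : Fin (d+1), C i l * Real.exp (Function.update z j t l))
        (∑ l : Fin (d+1), if l = j then C i j * Real.exp (z j) else 0) (z j) := by
      apply HasDerivAt.fun_sum
      intro l _
      by_cases h : l = j
      · subst h
        simp only [Function.update_self, if_pos rfl]
        exact (Real.hasDerivAt_exp (z l)).const_mul (C i l)
      · simp only [Function.update_of_ne h, if_neg h]
        exact hasDerivAt_const _ _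
    simpa using h
  -- derivative of denominator
  have hS : HasDerivAt (fun t => ∑ μ, p μ * Real.exp (Function.update z j t μ))
      (p j * Real.exp (z j)) (z j) := by
    have h : HasDerivAt (fun t => ∑ μ : Fin (d+1), p μ * Real.exp (Function.update z j t μ))
        (∑ μ : Fin (d+1), if μ = j then p j * Real.exp (z j) else 0) (z j) := by
      apply HasDerivAt.fun_sum
      intro μ _
      by_cases h : μ = j
      · subst h
        simp only [Function.update_self, if_pos rfl]
        exact (Real.hasDerivAt_exp (z μ)).const_mul (p μ)
      · simp only [Function.update_of_ne h, if_neg h]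
        exact hasDerivAt_const _ _
    simpa using h
  have hupd : Function.update z j (z j) = z := Function.update_eq_self j z
  have hdiv := hN.div hS (by rw [hupd]; exact (hSpos z).ne')
  rw [hupd] at hdiv
  have hfun : (fun t => V (Function.update z j t) i) =
      fun t => (∑ l, C i l * Real.exp (Function.update z j t l)) /
        (∑ μ, p μ * Real.exp (Function.update z j t μ)) := funext fun t => hV _ i
  rw [hfun]
  refine hdiv.congr_deriv (Eq.symm ?_)
  -- value equality
  set S : ℝ := ∑ μ, p μ * Real.exp (z μ) with hSdef
  have hSne : S ≠ 0 := (hSpos z).ne'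
  have h1 : ∀ l, ∑ μ, A j μ * C μ l = if j = l then 1 else 0 := by
    intro l
    have := congrFun (congrFun hC₂ j) l
    rw [Matrix.mul_apply] at this
    rw [this, Matrix.one_apply]
  have hAC : ∑ μ, A j μ * (∑ l, C μ l * Real.exp (z l)) = Real.exp (z j) := by
    calc ∑ μ, A j μ * (∑ l, C μ l * Real.exp (z l))
        = ∑ μ, ∑ l, A j μ * C μ l * Real.exp (z l) := by
          simp [Finset.mul_sum, mul_assoc]
      _ = ∑ l, (∑ μ, A j μ * C μ l) * Real.exp (z l) := by
          rw [Finset.sum_comm]; simp [Finset.sum_mul]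
      _ = ∑ l, (if j = l then 1 else 0) * Real.exp (z l) := by
          simp_rw [h1]
      _ = Real.exp (z j) := by simp
  have hsum : ∑ μ, A j μ * V z μ = Real.exp (z j) / S := by
    calc ∑ μ, A j μ * V z μ
        = ∑ μ, A j μ * ((∑ l, C μ l * Real.exp (z l)) / S) := by
          simp_rw [hV]; rfl
      _ = (∑ μ, A j μ * (∑ l, C μ l * Real.exp (z l))) / S := by
          rw [Finset.sum_div]; simp [mul_div_assoc]
      _ = Real.exp (z j) / S := by rw [hAC]
  rw [hsum, hV, ← hSdef]
  field_simp
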